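/- Let A and B be irreducible non-permutation {0,1}-matrices, and let (X_A, σ_A) and (X_B, σ_B) be continuously orbit equivalent via a homeomorphism h: X_A → X_B with continuous functions k_1, l_1: X_A → ℤ_{≥0} and k_2, l_2: X_B → ℤ_{≥0}. If either of the cocycle functions c_1 = l_1 − k_1 on X_A or c_2 = l_2 − k_2 on X_B is a constant function, then both c_1 and c_2 are identically equal to 1. -/

import Mathlib

/-- The group structure on self-homeomorphisms, with `(f * g) x = f (g x)`. -/
instance homeoGroup {X : Type*} [TopologicalSpace X] : Group (X ≃ₜ X) where
  mul f g := g.trans f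
  one := Homeomorph.refl X
  inv := Homeomorph.symm
  mul_assoc _ _ _ := Homeomorph.ext fun _ => rfl
  one_mul _ := Homeomorph.ext fun _ => rfl
  mul_one _ := Homeomorph.ext fun _ => rfl
  inv_mul_cancel f := Homeomorph.ext f.symm_apply_apply

private lemma iter_swap {α : Type*} (f : α → α) (a b : ℕ) (x : α) :
    f^[a] (f^[b] x) = f^[b] (f^[a] x) := by
  rw [← Function.iterate_add_apply, ← Function.iterate_add_apply, add_comm]

/-- The one-sided topological Markov shift space `X_A` of a 0-1 matrix `A`. -/
def MarkovShift {N : ℕ} (A : Matrix (Fin N) (Fin N) ℕ) : Set (ℕ → Fin N) :=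
  {x | ∀ n, A (x n) (x (n + 1)) = 1}

/-- The shift transformation `σ_A` on `X_A`. -/
def shift {N : ℕ} (A : Matrix (Fin N) (Fin N) ℕ) :
    ↥(MarkovShift A) → ↥(MarkovShift A) :=
  fun x => ⟨fun n => x.1 (n + 1), fun n => x.2 (n + 1)⟩

/-- `A` is a {0,1}-matrix which is irreducible and not a permutation matrix. -/
structure IsIrredNonPerm {N : ℕ} (A : Matrix (Fin N) (Fin N) ℕ) : Prop where
  zero_one : ∀ i j, A i j = 0 ∨ A i j = 1
  irreducible : ∀ i j, ∃ n, 1 ≤ n ∧ 0 < (A ^ n) i j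
  not_perm : ¬ ∃ e : Equiv.Perm (Fin N), ∀ i j, A i j = if e i = j then 1 else 0

/-- The continuous full group `Γ_A`. -/
def fullGroup {N : ℕ} (A : Matrix (Fin N) (Fin N) ℕ) :
    Subgroup (↥(MarkovShift A) ≃ₜ ↥(MarkovShift A)) where
  carrier := {τ | ∃ k l : ↥(MarkovShift A) → ℕ, Continuous k ∧ Continuous l ∧
      ∀ x, (shift A)^[k x] (τ x) = (shift A)^[l x] x}
  one_mem' := ⟨fun _ => 0, fun _ => 0, continuous_const, continuous_const, fun _ => rfl⟩
  mul_mem' := by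
    rintro τ₁ τ₂ ⟨k, l, hk, hl, hrel⟩ ⟨k', l', hk', hl', hrel'⟩
    refine ⟨fun x => k (τ₂ x) + k' x, fun x => l (τ₂ x) + l' x,
      (hk.comp τ₂.continuous).add hk', (hl.comp τ₂.continuous).add hl', fun x => ?_⟩
    show (shift A)^[k (τ₂ x) + k' x] (τ₁ (τ₂ x)) = (shift A)^[l (τ₂ x) + l' x] x
    rw [add_comm (k (τ₂ x)) (k' x), Function.iterate_add_apply, hrel (τ₂ x), iter_swap,
      hrel' x, ← Function.iterate_add_apply]
  inv_mem' := by
    rintro τ ⟨k, l, hk, hl, hrel⟩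
    refine ⟨fun x => l (τ.symm x), fun x => k (τ.symm x),
      hl.comp τ.symm.continuous, hk.comp τ.symm.continuous, fun x => ?_⟩
    show (shift A)^[l (τ.symm x)] (τ.symm x) = (shift A)^[k (τ.symm x)] x
    have h0 := hrel (τ.symm x)
    rw [τ.apply_symm_apply] at h0
    exact h0.symm

/-- The subgroup `Γ_A^{AF}` of the continuous full group. -/
def afGroup {N : ℕ} (A : Matrix (Fin N) (Fin N) ℕ) :
    Subgroup (↥(MarkovShift A) ≃ₜ ↥(MarkovShift A)) where
  carrier := {τ | ∃ K : ℕ, ∀ x, (shift A)^[K] (τ x) = (shift A)^[K] x}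
  one_mem' := ⟨0, fun _ => rfl⟩
  mul_mem' := by
    rintro τ₁ τ₂ ⟨K, hK⟩ ⟨K', hK'⟩
    refine ⟨K' + K, fun x => ?_⟩
    show (shift A)^[K' + K] (τ₁ (τ₂ x)) = (shift A)^[K' + K] x
    rw [Function.iterate_add_apply, hK (τ₂ x), iter_swap, hK' x, iter_swap,
      ← Function.iterate_add_apply]
  inv_mem' := by
    rintro τ ⟨K, hK⟩
    refine ⟨K, fun x => ?_⟩
    show (shift A)^[K] (τ.symm x) = (shift A)^[K] x
    have h0 := hK (τ.symm x)
    rw [τ.apply_symm_apply] at h0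
    exact h0.symm

/-- `h`, together with `k₁, l₁, k₂, l₂`, witnesses a continuous orbit equivalence
between `(X_A, σ_A)` and `(X_B, σ_B)`. -/
def COEWitness {N M : ℕ} (A : Matrix (Fin N) (Fin N) ℕ) (B : Matrix (Fin M) (Fin M) ℕ)
    (h : ↥(MarkovShift A) ≃ₜ ↥(MarkovShift B)) (k₁ l₁ : ↥(MarkovShift A) → ℕ)
    (k₂ l₂ : ↥(MarkovShift B) → ℕ) : Prop :=
  Continuous k₁ ∧ Continuous l₁ ∧ Continuous k₂ ∧ Continuous l₂ ∧
  (∀ x, (shift B)^[k₁ x] (h (shift A x)) = (shift B)^[l₁ x] (h x)) ∧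
  (∀ y, (shift A)^[k₂ y] (h.symm (shift B y)) = (shift A)^[l₂ y] (h.symm y))

/-- `(X_A, σ_A)` and `(X_B, σ_B)` are continuously orbit equivalent. -/
def COE {N M : ℕ} (A : Matrix (Fin N) (Fin N) ℕ) (B : Matrix (Fin M) (Fin M) ℕ) : Prop :=
  ∃ h k₁ l₁ k₂ l₂, COEWitness A B h k₁ l₁ k₂ l₂

/-- The extra uniformity condition on a homeomorphism `h : X_A → X_B`:
elements of `Γ_A^{AF}` and `Γ_B^{AF}` are uniformly intertwined by `h`. -/
def UniformWitness {N M : ℕ} (A : Matrix (Fin N) (Fin N) ℕ) (B : Matrix (Fin M) (Fin M) ℕ)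
    (h : ↥(MarkovShift A) ≃ₜ ↥(MarkovShift B)) : Prop :=
  (∀ τ₁ ∈ afGroup A, ∃ K : ℕ, ∀ x, (shift B)^[K] (h (τ₁ x)) = (shift B)^[K] (h x)) ∧
  (∀ τ₂ ∈ afGroup B, ∃ K : ℕ, ∀ y, (shift A)^[K] (h.symm (τ₂ y)) = (shift A)^[K] (h.symm y))

/-- `(X_A, σ_A)` and `(X_B, σ_B)` are uniformly continuously orbit equivalent. -/
def UCOE {N M : ℕ} (A : Matrix (Fin N) (Fin N) ℕ) (B : Matrix (Fin M) (Fin M) ℕ) : Prop :=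
  ∃ h k₁ l₁ k₂ l₂, COEWitness A B h k₁ l₁ k₂ l₂ ∧ UniformWitness A B h

/-- `(X_A, σ_A)` and `(X_B, σ_B)` are uniformly orbit equivalent. -/
def UOE {N M : ℕ} (A : Matrix (Fin N) (Fin N) ℕ) (B : Matrix (Fin M) (Fin M) ℕ) : Prop :=
  ∃ h : ↥(MarkovShift A) ≃ₜ ↥(MarkovShift B), UniformWitness A B h

/-- `(X_A, σ_A)` and `(X_B, σ_B)` are eventually one-sided conjugate. -/
def EventuallyConjugate {N M : ℕ} (A : Matrix (Fin N) (Fin N) ℕ)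
    (B : Matrix (Fin M) (Fin M) ℕ) : Prop :=
  ∃ (h : ↥(MarkovShift A) ≃ₜ ↥(MarkovShift B)) (K₁ K₂ : ℕ),
    (∀ x, (shift B)^[K₁] (h (shift A x)) = (shift B)^[K₁ + 1] (h x)) ∧
    (∀ y, (shift A)^[K₂] (h.symm (shift B y)) = (shift A)^[K₂ + 1] (h.symm y))

/-- Conjugation of a self-homeomorphism of `X_A` by `h : X_A ≃ₜ X_B`,
i.e. `h ∘ τ ∘ h⁻¹`. -/
def conjHomeo {N M : ℕ} {A : Matrix (Fin N) (Fin N) ℕ} {B : Matrix (Fin M) (Fin M) ℕ}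
    (h : ↥(MarkovShift A) ≃ₜ ↥(MarkovShift B))
    (τ : ↥(MarkovShift A) ≃ₜ ↥(MarkovShift A)) : ↥(MarkovShift B) ≃ₜ ↥(MarkovShift B) :=
  (h.symm.trans τ).trans h

/-- A point `x ∈ X_A` is eventually periodic. -/
def EventuallyPeriodicPt {N : ℕ} (A : Matrix (Fin N) (Fin N) ℕ)
    (x : ↥(MarkovShift A)) : Prop :=
  ∃ r s : ℕ, s < r ∧ (shift A)^[r] x = (shift A)^[s] x

/-- `f^k(x) = Σ_{i=0}^{k-1} f(σ_A^i(x))`. -/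
def cocycleSum {N : ℕ} (A : Matrix (Fin N) (Fin N) ℕ) (f : ↥(MarkovShift A) → ℕ)
    (k : ℕ) (x : ↥(MarkovShift A)) : ℕ :=
  ∑ i ∈ Finset.range k, f ((shift A)^[i] x)

namespace COEaux

variable {N : ℕ} {A : Matrix (Fin N) (Fin N) ℕ}

lemma shift_coord (x : ↥(MarkovShift A)) (n : ℕ) : (shift A x).1 n = x.1 (n+1) := rfl

lemma iter_coord (m : ℕ) (x : ↥(MarkovShift A)) (n : ℕ) :
    ((shift A)^[m] x).1 n = x.1 (n + m) := by
  induction m generalizing x n with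
  | zero => rfl
  | succ m ih =>
      rw [Function.iterate_succ_apply, ih, shift_coord]
      ring_nf

lemma pt_ext {x y : ↥(MarkovShift A)} (h : ∀ n, x.1 n = y.1 n) : x = y :=
  Subtype.ext (funext h)

lemma row_ex (hA : IsIrredNonPerm A) (i : Fin N) : ∃ j, A i j = 1 := by
  obtain ⟨n, hn, hpos⟩ := hA.irreducible i i
  obtain ⟨m, rfl⟩ : ∃ m, n = m + 1 := ⟨n - 1, by omega⟩
  rw [pow_succ'] at hpos
  rw [Matrix.mul_apply] at hpos
  obtain ⟨u, _, hu⟩ := Finset.exists_ne_zero_of_sum_ne_zero (by omega : (∑ j, A i j * (A ^ m) j i) ≠ 0)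
  refine ⟨u, ?_⟩
  rcases hA.zero_one i u with h0 | h1
  · simp [h0] at hu
  · exact h1

lemma col_ex (hA : IsIrredNonPerm A) (j : Fin N) : ∃ i, A i j = 1 := by
  obtain ⟨n, hn, hpos⟩ := hA.irreducible j j
  obtain ⟨m, rfl⟩ : ∃ m, n = m + 1 := ⟨n - 1, by omega⟩
  rw [pow_succ] at hpos
  rw [Matrix.mul_apply] at hpos
  obtain ⟨u, _, hu⟩ := Finset.exists_ne_zero_of_sum_ne_zero (by omega : (∑ i, (A ^ m) j i * A i j) ≠ 0)
  refine ⟨u, ?_⟩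
  rcases hA.zero_one u j with h0 | h1
  · simp [h0] at hu
  · exact h1

/-- successor choice function -/
noncomputable def succF (hA : IsIrredNonPerm A) : Fin N → Fin N :=
  fun i => (row_ex hA i).choose

lemma succF_spec (hA : IsIrredNonPerm A) (i : Fin N) : A i (succF hA i) = 1 :=
  (row_ex hA i).choose_spec

/-- a point of the shift space starting at a given vertex -/
noncomputable def vertexPt (hA : IsIrredNonPerm A) (i : Fin N) : ↥(MarkovShift A) :=
  ⟨fun n => (succF hA)^[n] i, fun n => by
    show A ((succF hA)^[n] i) ((succF hA)^[n+1] i) = 1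
    rw [Function.iterate_succ_apply']
    exact succF_spec hA _⟩

lemma vertexPt_zero (hA : IsIrredNonPerm A) (i : Fin N) : (vertexPt hA i).1 0 = i := rfl

/-- prepend a vertex -/
def consPt (x : ↥(MarkovShift A)) (i : Fin N) (hi : A i (x.1 0) = 1) : ↥(MarkovShift A) :=
  ⟨fun n => match n with | 0 => i | Nat.succ k => x.1 k, by
    intro n
    match n with
    | 0 => exact hi
    | Nat.succ k => exact x.2 k⟩

lemma consPt_zero (x : ↥(MarkovShift A)) (i : Fin N) (hi : A i (x.1 0) = 1) :
    (consPt x i hi).1 0 = i := rfl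

lemma shift_consPt (x : ↥(MarkovShift A)) (i : Fin N) (hi : A i (x.1 0) = 1) :
    shift A (consPt x i hi) = x := pt_ext (fun n => rfl)

lemma shift_surj (hA : IsIrredNonPerm A) : Function.Surjective (shift A) := by
  intro x
  obtain ⟨i, hi⟩ := col_ex hA (x.1 0)
  exact ⟨consPt x i hi, shift_consPt x i hi⟩

/-- backward extension by m steps -/
noncomputable def backExt (hA : IsIrredNonPerm A) : ℕ → ↥(MarkovShift A) → ↥(MarkovShift A)
  | 0, x => x
  | (m+1), x =>
      consPt (backExt hA m x) ((col_ex hA ((backExt hA m x).1 0)).choose)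
        ((col_ex hA ((backExt hA m x).1 0)).choose_spec)

lemma iter_backExt (hA : IsIrredNonPerm A) (m : ℕ) (x : ↥(MarkovShift A)) :
    (shift A)^[m] (backExt hA m x) = x := by
  induction m with
  | zero => rfl
  | succ m ih =>
      rw [Function.iterate_succ_apply, backExt, shift_consPt]
      exact ih

end COEaux


namespace COEaux

variable {N : ℕ} {A : Matrix (Fin N) (Fin N) ℕ}

lemma exists_path (hA : IsIrredNonPerm A) :
    ∀ n, 1 ≤ n → ∀ i j : Fin N, 0 < (A ^ n) i j →
      ∃ w : ℕ → Fin N, w 0 = i ∧ w n = j ∧ ∀ m < n, A (w m) (w (m+1)) = 1 := by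
  intro n
  induction n with
  | zero => omega
  | succ n ih =>
      intro _ i j hpos
      rcases Nat.eq_zero_or_pos n with rfl | hn
      · refine ⟨fun m => if m = 0 then i else j, by simp, by simp, ?_⟩
        intro m hm
        interval_cases m
        have hpos' : 0 < A i j := by simpa using hpos
        rcases hA.zero_one i j with h0 | h1
        · omega
        · simpa using h1
      · rw [pow_succ, Matrix.mul_apply] at hpos
        obtain ⟨u, _, hu⟩ := Finset.exists_ne_zero_of_sum_ne_zero
          (by omega : (∑ u, (A ^ n) i u * A u j) ≠ 0)
        have h1 : 0 < (A ^ n) i u := Nat.pos_of_ne_zero (by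
          intro h0; rw [h0] at hu; simp at hu)
        have h2 : A u j = 1 := by
          rcases hA.zero_one u j with h0 | h1
          · rw [h0] at hu; simp at hu
          · exact h1
        obtain ⟨w, hw0, hwn, hwe⟩ := ih hn i u h1
        refine ⟨fun m => if m ≤ n then w m else j, by simp [hw0], by simp, ?_⟩
        intro m hm
        rcases Nat.lt_or_ge m n with h | h
        · simp only [if_pos (by omega : m ≤ n), if_pos (by omega : m + 1 ≤ n)]
          exact hwe m h
        · have hmn : m = n := by omega
          subst hmn
          simp only [if_pos le_rfl, if_neg (by omega : ¬ m + 1 ≤ m), hwn]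
          exact h2

lemma path_between (hA : IsIrredNonPerm A) (i j : Fin N) :
    ∃ r, 1 ≤ r ∧ ∃ w : ℕ → Fin N, w 0 = i ∧ w r = j ∧ ∀ m < r, A (w m) (w (m+1)) = 1 := by
  obtain ⟨n, hn, hpos⟩ := hA.irreducible i j
  exact ⟨n, hn, exists_path hA n hn i j hpos⟩

lemma branch_row (hA : IsIrredNonPerm A) :
    ∃ i j j', j ≠ j' ∧ A i j = 1 ∧ A i j' = 1 := by
  by_contra hc
  push_neg at hc
  apply hA.not_perm
  have huniq : ∀ i j j', A i j = 1 → A i j' = 1 → j = j' := by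
    intro i j j' h1 h2
    by_contra hne
    exact hc i j j' hne h1 h2
  set f : Fin N → Fin N := fun i => (row_ex hA i).choose with hf
  have hfs : ∀ i, A i (f i) = 1 := fun i => (row_ex hA i).choose_spec
  have hsurj : Function.Surjective f := by
    intro j
    obtain ⟨i, hi⟩ := col_ex hA j
    exact ⟨i, huniq i (f i) j (hfs i) hi⟩
  have hbij : Function.Bijective f := Finite.surjective_iff_bijective.mp hsurj
  refine ⟨Equiv.ofBijective f hbij, ?_⟩
  intro i j
  by_cases hij : f i = j
  · simp only [Equiv.ofBijective_apply, hij, if_pos]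
    rw [← hij]; exact hfs i
  · simp only [Equiv.ofBijective_apply, hij, if_neg]
    rcases hA.zero_one i j with h0 | h1
    · exact h0
    · exact absurd (huniq i (f i) j (hfs i) h1) hij

lemma branch_col (hA : IsIrredNonPerm A) :
    ∃ j i i', i ≠ i' ∧ A i j = 1 ∧ A i' j = 1 := by
  by_contra hc
  push_neg at hc
  apply hA.not_perm
  have huniq : ∀ j i i', A i j = 1 → A i' j = 1 → i = i' := by
    intro j i i' h1 h2
    by_contra hne
    exact hc j i i' hne h1 h2
  set g : Fin N → Fin N := fun j => (col_ex hA j).choose with hg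
  have hgs : ∀ j, A (g j) j = 1 := fun j => (col_ex hA j).choose_spec
  have hsurj : Function.Surjective g := by
    intro i
    obtain ⟨j, hj⟩ := row_ex hA i
    exact ⟨j, huniq j (g j) i (hgs j) hj⟩
  have hbij : Function.Bijective g := Finite.surjective_iff_bijective.mp hsurj
  have key : ∀ i j, (Equiv.ofBijective g hbij).symm i = j ↔ g j = i := by
    intro i j
    constructor
    · rintro rfl
      exact Equiv.apply_symm_apply (Equiv.ofBijective g hbij) i
    · rintro rfl
      exact Equiv.symm_apply_apply (Equiv.ofBijective g hbij) j
  refine ⟨(Equiv.ofBijective g hbij).symm, ?_⟩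
  intro i j
  by_cases hij : (Equiv.ofBijective g hbij).symm i = j
  · rw [if_pos hij]
    rw [← ((key i j).mp hij)]
    exact hgs j
  · rw [if_neg hij]
    rcases hA.zero_one i j with h0 | h1
    · exact h0
    · exact absurd ((key i j).mpr (huniq j (g j) i (hgs j) h1)) hij

lemma shift_not_inj (hA : IsIrredNonPerm A) :
    ∃ x x' : ↥(MarkovShift A), x ≠ x' ∧ shift A x = shift A x' := by
  obtain ⟨j, i, i', hne, hi, hi'⟩ := branch_col hA
  set z := vertexPt hA j with hz
  have h0 : z.1 0 = j := rfl
  refine ⟨consPt z i (by rw [h0]; exact hi), consPt z i' (by rw [h0]; exact hi'), ?_, ?_⟩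
  · intro he
    have : i = i' := by
      have := congrArg (fun t => t.1 0) he
      exact this
    exact hne this
  · rw [shift_consPt, shift_consPt]

lemma ep_shift (x : ↥(MarkovShift A)) (m : ℕ) (hx : EventuallyPeriodicPt A x) :
    EventuallyPeriodicPt A ((shift A)^[m] x) := by
  obtain ⟨r, s, hrs, he⟩ := hx
  refine ⟨r, s, hrs, ?_⟩
  rw [← Function.iterate_add_apply, ← Function.iterate_add_apply, add_comm r m, add_comm s m,
    Function.iterate_add_apply, Function.iterate_add_apply, he]

lemma not_ep_of_iter_not_ep (x : ↥(MarkovShift A)) (m : ℕ)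
    (hx : ¬ EventuallyPeriodicPt A ((shift A)^[m] x)) : ¬ EventuallyPeriodicPt A x :=
  fun h => hx (ep_shift x m h)

lemma iter_eq_of_not_ep {y : ↥(MarkovShift A)} (hy : ¬ EventuallyPeriodicPt A y)
    {r s : ℕ} (h : (shift A)^[r] y = (shift A)^[s] y) : r = s := by
  by_contra hne
  rcases Nat.lt_or_ge r s with hlt | hge
  · exact hy ⟨s, r, hlt, h.symm⟩
  · exact hy ⟨r, s, by omega, h⟩

lemma ep_countable : (setOf (EventuallyPeriodicPt A)).Countable := by
  have : setOf (EventuallyPeriodicPt A) =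
      ⋃ p : ℕ × ℕ, {x | p.2 < p.1 ∧ (shift A)^[p.1] x = (shift A)^[p.2] x} := by
    ext x
    simp only [Set.mem_setOf_eq, Set.mem_iUnion, EventuallyPeriodicPt, Prod.exists]
    exact Iff.rfl
  rw [this]
  refine Set.countable_iUnion (fun p => Set.Countable.mono (Set.Subset.refl _) ?_)
  -- show each piece is finite hence countable
  have hfin : {x : ↥(MarkovShift A) | p.2 < p.1 ∧ (shift A)^[p.1] x = (shift A)^[p.2] x}.Finite := by
    have hinj : Set.InjOn (fun (x : ↥(MarkovShift A)) => (fun i : Fin p.1 => x.1 i))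
        {x | p.2 < p.1 ∧ (shift A)^[p.1] x = (shift A)^[p.2] x} := by
      rintro x ⟨hp, hx⟩ y ⟨_, hy⟩ hxy
      have hcoord : ∀ i : Fin p.1, x.1 i = y.1 i := fun i => congrFun hxy i
      apply pt_ext
      intro n
      induction n using Nat.strong_induction_on with
      | _ n ih =>
        rcases Nat.lt_or_ge n p.1 with h | h
        · exact hcoord ⟨n, h⟩
        · have hx' : x.1 n = x.1 (n - p.1 + p.2) := by
            have := congrArg (fun t => t.1 (n - p.1)) hx
            simp only [iter_coord] at this
            rw [show n = n - p.1 + p.1 by omega]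
            rw [show n - p.1 + p.1 - p.1 = n - p.1 by omega]
            exact this
          have hy' : y.1 n = y.1 (n - p.1 + p.2) := by
            have := congrArg (fun t => t.1 (n - p.1)) hy
            simp only [iter_coord] at this
            rw [show n = n - p.1 + p.1 by omega]
            rw [show n - p.1 + p.1 - p.1 = n - p.1 by omega]
            exact this
          rw [hx', hy']
          exact ih _ (by omega)
    exact Set.Finite.of_finite_image (Set.toFinite _) hinj
  exact hfin.countable

end COEaux


namespace COEaux

variable {N : ℕ} {A : Matrix (Fin N) (Fin N) ℕ}

lemma exists_nonep (hA : IsIrredNonPerm A) :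
    ∃ x₀ : ↥(MarkovShift A), ¬ EventuallyPeriodicPt A x₀ := by
  obtain ⟨i₀, j₁, j₂, hjne, hj1, hj2⟩ := branch_row hA
  set jb : Bool → Fin N := fun b => cond b j₁ j₂ with hjb
  have hjbE : ∀ b, A i₀ (jb b) = 1 := by intro b; cases b <;> simpa [hjb]
  have loop : ∀ b : Bool, ∃ p, 2 ≤ p ∧ ∃ lam : ℕ → Fin N, lam 0 = i₀ ∧ lam p = i₀ ∧
      lam 1 = jb b ∧ ∀ m < p, A (lam m) (lam (m+1)) = 1 := by
    intro b
    obtain ⟨r, hr, w, hw0, hwr, hwe⟩ := path_between hA (jb b) i₀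
    refine ⟨r + 1, by omega, fun m => if m = 0 then i₀ else w (m-1), by simp, ?_, ?_, ?_⟩
    · simpa using hwr
    · simpa using hw0
    · intro m hm
      match m with
      | 0 => simpa [hw0] using hjbE b
      | (m'+1) =>
          simp only [if_neg (Nat.succ_ne_zero m'), Nat.add_sub_cancel]
          exact hwe m' (by omega)
  choose p hp lam h0 hPe h1 hedge using loop
  set P := p true * p false with hPdef
  have hdvd : ∀ b, p b ∣ P := by
    intro b; cases b
    · exact ⟨p true, by rw [hPdef, mul_comm]⟩
    · exact ⟨p false, hPdef⟩
  have hppos : ∀ b, 0 < p b := fun b => by have := hp b; omega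
  have hP2 : 2 ≤ P := by
    have := Nat.mul_le_mul (hp true) (hp false)
    omega
  set ℓ : Bool → ℕ → Fin N := fun b k => lam b (k % p b) with hldef
  have hl0 : ∀ b, ℓ b 0 = i₀ := by intro b; simp only [hldef, Nat.zero_mod]; exact h0 b
  have hl1 : ∀ b, ℓ b 1 = jb b := by
    intro b; simp only [hldef, Nat.mod_eq_of_lt (by have := hp b; omega : 1 < p b)]
    exact h1 b
  have hlP : ∀ b k, ℓ b (k % P) = ℓ b k := by
    intro b k; simp only [hldef, Nat.mod_mod_of_dvd k (hdvd b)]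
  have hedge' : ∀ b k, A (ℓ b k) (ℓ b (k+1)) = 1 := by
    intro b k
    set a := k % p b with hadef
    have ha : a < p b := Nat.mod_lt _ (hppos b)
    have hk1 : (k+1) % p b = (a+1) % p b := by
      conv_lhs => rw [Nat.add_mod, Nat.mod_eq_of_lt (by have := hp b; omega : 1 < p b)]
    rcases (by omega : a + 1 < p b ∨ a + 1 = p b) with hlt | heq
    · have : (k+1) % p b = a+1 := by rw [hk1, Nat.mod_eq_of_lt hlt]
      show A (lam b a) (lam b ((k+1) % p b)) = 1
      rw [this]
      exact hedge b a (by omega)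
    · have : (k+1) % p b = 0 := by rw [hk1, heq, Nat.mod_self]
      show A (lam b a) (lam b ((k+1) % p b)) = 1
      rw [this, h0 b, ← hPe b, ← heq]
      exact hedge b a (by omega)
  set xs : (ℕ → Bool) → (ℕ → Fin N) := fun s k => ℓ (s (k / P)) (k % P) with hxsdef
  have hxs_mem : ∀ s, xs s ∈ MarkovShift A := by
    intro s k
    set n := k / P with hn
    set a := k % P with ha'
    have ha : a < P := Nat.mod_lt _ (by omega)
    show A (ℓ (s n) a) (ℓ (s ((k+1)/P)) ((k+1) % P)) = 1
    rcases (by omega : a + 1 < P ∨ a + 1 = P) with hlt | heq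
    · have hm : (k+1) % P = a + 1 := by
        conv_lhs => rw [Nat.add_mod, Nat.mod_eq_of_lt (by omega : 1 < P)]
        rw [← ha', Nat.mod_eq_of_lt hlt]
      have hnd : ¬ (P ∣ (k+1)) := by
        intro hd
        obtain ⟨c, hc⟩ := hd
        rw [hc, Nat.mul_mod_right] at hm
        omega
      have hd : (k+1)/P = n := by rw [Nat.succ_div, if_neg hnd, add_zero]
      rw [hd, hm]
      exact hedge' (s n) a
    · have hm0 : (k+1) % P = 0 := by
        conv_lhs => rw [Nat.add_mod, Nat.mod_eq_of_lt (by omega : 1 < P)]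
        rw [← ha', heq, Nat.mod_self]
      have hd1 : (k+1)/P = n + 1 := by
        rw [Nat.succ_div, if_pos (Nat.dvd_of_mod_eq_zero hm0)]
      have hP0 : ℓ (s n) (a+1) = i₀ := by
        rw [heq]
        show lam (s n) (P % p (s n)) = i₀
        obtain ⟨c, hc⟩ := hdvd (s n)
        rw [hc, Nat.mul_mod_right]
        exact h0 (s n)
      rw [hd1, hm0, hl0, ← hP0]
      exact hedge' (s n) a
  have hinj : Function.Injective xs := by
    intro s s' hss
    funext n
    have hev := congrFun hss (P * n + 1)
    have hdiv : (P * n + 1) / P = n := by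
      rw [Nat.mul_add_div (by omega : 0 < P)]
      simp [Nat.div_eq_of_lt (by omega : 1 < P)]
    have hmod : (P * n + 1) % P = 1 := by
      rw [Nat.mul_add_mod, Nat.mod_eq_of_lt (by omega : 1 < P)]
    rw [show xs s (P * n + 1) = ℓ (s ((P*n+1)/P)) ((P*n+1) % P) from rfl,
      show xs s' (P * n + 1) = ℓ (s' ((P*n+1)/P)) ((P*n+1) % P) from rfl,
      hdiv, hmod, hl1, hl1] at hev
    cases hb : s n <;> cases hb' : s' n <;> rw [hb, hb'] at hev <;>
      simp only [hjb, cond_true, cond_false] at hev <;> first | rfl | exact absurd hev.symm hjne | exact absurd hev hjne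
  by_contra hcon
  push_neg at hcon
  set F : (ℕ → Bool) → ↥(MarkovShift A) := fun s => ⟨xs s, hxs_mem s⟩ with hF
  have hFinj : Function.Injective F := by
    intro s s' h
    exact hinj (congrArg Subtype.val h)
  have hsub : Set.range F ⊆ setOf (EventuallyPeriodicPt A) := by
    intro z _
    exact hcon z
  have hcnt : (Set.range F).Countable := Set.Countable.mono hsub ep_countable
  haveI : Countable (Set.range F) := hcnt.to_subtype
  haveI : Countable (ℕ → Bool) := Countable.of_equiv _ (Equiv.ofInjective F hFinj).symm
  obtain ⟨g, hg⟩ := exists_injective_nat (ℕ → Bool)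
  set e : (ℕ → Prop) ≃ (ℕ → Bool) := Equiv.arrowCongr (Equiv.refl ℕ) Equiv.propEquivBool with he
  exact Function.cantor_injective (g ∘ e) (hg.comp e.injective)
end COEaux


namespace COEaux

variable {N : ℕ} {A : Matrix (Fin N) (Fin N) ℕ}

lemma exists_nonep_cyl (hA : IsIrredNonPerm A) (y : ↥(MarkovShift A)) (n : ℕ) :
    ∃ z : ↥(MarkovShift A), (∀ k < n, z.1 k = y.1 k) ∧ ¬ EventuallyPeriodicPt A z := by
  obtain ⟨x₀, hx₀⟩ := exists_nonep hA
  rcases Nat.eq_zero_or_pos n with rfl | hn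
  · exact ⟨x₀, fun k hk => absurd hk (by omega), hx₀⟩
  set q := n - 1 with hq
  obtain ⟨r, hr, w, hw0, hwr, hwe⟩ := path_between hA (y.1 q) (x₀.1 0)
  set zf : ℕ → Fin N := fun k =>
    if k ≤ q then y.1 k else if k ≤ q + r then w (k - q) else x₀.1 (k - (q + r)) with hzf
  have hmem : zf ∈ MarkovShift A := by
    intro k
    rcases (by omega : k + 1 ≤ q ∨ k = q ∨ (q < k ∧ k + 1 ≤ q + r) ∨ k = q + r ∨ q + r < k)
      with h | h | ⟨h1, h2⟩ | h | h
    · simp only [hzf, if_pos (by omega : k ≤ q), if_pos h]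
      exact y.2 k
    · simp only [hzf, if_pos (by omega : k ≤ q), if_neg (by omega : ¬ k + 1 ≤ q),
        if_pos (by omega : k + 1 ≤ q + r), show k + 1 - q = 1 by omega]
      have hyq : y.1 k = w 0 := by rw [hw0, h]
      rw [hyq]
      exact hwe 0 hr
    · simp only [hzf, if_neg (by omega : ¬ k ≤ q), if_pos (by omega : k ≤ q + r),
        if_neg (by omega : ¬ k + 1 ≤ q), if_pos h2,
        show k + 1 - q = (k - q) + 1 by omega]
      exact hwe (k - q) (by omega)
    · simp only [hzf, if_neg (by omega : ¬ k ≤ q), if_pos (by omega : k ≤ q + r),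
        if_neg (by omega : ¬ k + 1 ≤ q), if_neg (by omega : ¬ k + 1 ≤ q + r),
        show k - q = r by omega, show k + 1 - (q + r) = 1 by omega, hwr]
      exact x₀.2 0
    · simp only [hzf, if_neg (by omega : ¬ k ≤ q), if_neg (by omega : ¬ k ≤ q + r),
        if_neg (by omega : ¬ k + 1 ≤ q), if_neg (by omega : ¬ k + 1 ≤ q + r),
        show k + 1 - (q + r) = (k - (q + r)) + 1 by omega]
      exact x₀.2 (k - (q + r))
  set z : ↥(MarkovShift A) := ⟨zf, hmem⟩ with hz
  have hiter : (shift A)^[q + r] z = x₀ := by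
    apply pt_ext
    intro m
    rw [iter_coord]
    show zf (m + (q + r)) = x₀.1 m
    rcases Nat.eq_zero_or_pos m with rfl | hm
    · simp only [hzf, zero_add, if_neg (by omega : ¬ q + r ≤ q), if_pos (le_refl (q + r)),
        Nat.add_sub_cancel_left, hwr]
    · simp only [hzf, if_neg (by omega : ¬ m + (q + r) ≤ q),
        if_neg (by omega : ¬ m + (q + r) ≤ q + r), Nat.add_sub_cancel]
  refine ⟨z, ?_, ?_⟩
  · intro k hk
    show zf k = y.1 k
    simp only [hzf, if_pos (by omega : k ≤ q)]
  · exact not_ep_of_iter_not_ep z (q + r) (by rw [hiter]; exact hx₀)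

end COEaux


namespace COEaux

variable {N : ℕ} {A : Matrix (Fin N) (Fin N) ℕ}

lemma markov_closed : IsClosed (MarkovShift A) := by
  have : MarkovShift A = ⋂ n, {x : ℕ → Fin N | A (x n) (x (n+1)) = 1} := by
    ext x; simp [MarkovShift, Set.mem_iInter]
  rw [this]
  refine isClosed_iInter (fun n => ?_)
  have hc : Continuous fun x : ℕ → Fin N => A (x n) (x (n+1)) := by
    have h1 : Continuous fun x : ℕ → Fin N => (x n, x (n+1)) :=
      (continuous_apply n).prodMk (continuous_apply (n+1))
    exact (continuous_of_discreteTopology (f := fun p : Fin N × Fin N => A p.1 p.2)).comp h1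
  exact isClosed_singleton.preimage hc

instance markov_compactSpace : CompactSpace ↥(MarkovShift A) :=
  isCompact_iff_compactSpace.mp markov_closed.isCompact

lemma exists_bound {f : ↥(MarkovShift A) → ℕ} (hf : Continuous f) : ∃ D, ∀ x, f x ≤ D := by
  have hfin : (Set.range f).Finite := (isCompact_range hf).finite_of_discrete
  rcases hfin.bddAbove with ⟨D, hD⟩
  exact ⟨D, fun x => hD (Set.mem_range_self x)⟩

lemma cyl_subset_open {U : Set ↥(MarkovShift A)} (hU : IsOpen U) {y : ↥(MarkovShift A)}
    (hy : y ∈ U) : ∃ n, ∀ z : ↥(MarkovShift A), (∀ k < n, z.1 k = y.1 k) → z ∈ U := by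
  obtain ⟨V, hV, hVU⟩ := isOpen_induced_iff.mp hU
  have hyV : y.1 ∈ V := by
    have : y ∈ Subtype.val ⁻¹' V := hVU ▸ hy
    exact this
  obtain ⟨I, u, hu, hsub⟩ := isOpen_pi_iff.mp hV y.1 hyV
  refine ⟨(I.sup id) + 1, fun z hz => ?_⟩
  have : z.1 ∈ (↑I : Set ℕ).pi u := by
    intro i hi
    have hiI : i ∈ I := hi
    have : i ≤ I.sup id := Finset.le_sup (f := id) hiI
    rw [hz i (by omega)]
    exact (hu i hiI).2
  have hzV : z.1 ∈ V := hsub this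
  rw [← hVU]
  exact hzV

end COEaux


namespace COEaux

variable {N M : ℕ} {A : Matrix (Fin N) (Fin N) ℕ} {B : Matrix (Fin M) (Fin M) ℕ}

lemma fiber_finite (t : ↥(MarkovShift B)) (m : ℕ) :
    Finite {y : ↥(MarkovShift B) // (shift B)^[m] y = t} := by
  apply Finite.of_injective (fun y : {y : ↥(MarkovShift B) // (shift B)^[m] y = t} =>
    (fun i : Fin m => y.1.1 i))
  intro y y' hyy
  apply Subtype.ext
  apply pt_ext
  intro n
  rcases Nat.lt_or_ge n m with hlt | hge
  · exact congrFun hyy ⟨n, hlt⟩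
  · have h1 : y.1.1 n = t.1 (n - m) := by
      have := congrArg (fun u => u.1 (n - m)) y.2
      simp only [iter_coord] at this
      rw [show n - m + m = n by omega] at this
      exact this
    have h2 : y'.1.1 n = t.1 (n - m) := by
      have := congrArg (fun u => u.1 (n - m)) y'.2
      simp only [iter_coord] at this
      rw [show n - m + m = n by omega] at this
      exact this
    rw [h1, h2]

lemma nonpos_impossible (hA : IsIrredNonPerm A) (hB : IsIrredNonPerm B)
    (h : ↥(MarkovShift A) ≃ₜ ↥(MarkovShift B)) (k₁ l₁ : ↥(MarkovShift A) → ℕ)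
    (hl₁ : Continuous l₁)
    (hrel : ∀ x, (shift B)^[k₁ x] (h (shift A x)) = (shift B)^[l₁ x] (h x))
    (c' : ℕ) (hcc : ∀ x, k₁ x = l₁ x + c') : False := by
  obtain ⟨D, hD⟩ := exists_bound hl₁
  have hboost : ∀ x, (shift B)^[D + c'] (h (shift A x)) = (shift B)^[D] (h x) := by
    intro x
    have h2 := congrArg ((shift B)^[D - l₁ x]) (hrel x)
    rw [← Function.iterate_add_apply, ← Function.iterate_add_apply] at h2
    have e1 : D - l₁ x + k₁ x = D + c' := by
      have := hD x; rw [hcc x]; omega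
    have e2 : D - l₁ x + l₁ x = D := by have := hD x; omega
    rw [e1, e2] at h2
    exact h2
  obtain ⟨x₁, x₂, hxne, hxe⟩ := shift_not_inj hA
  set t := (shift B)^[D] (h x₁) with ht
  have ht2 : (shift B)^[D] (h x₂) = t := by
    rw [ht, ← hboost x₁, ← hboost x₂, hxe]
  set S := {y : ↥(MarkovShift B) // (shift B)^[D] y = t} with hS
  set U := {z : ↥(MarkovShift B) // (shift B)^[D + c'] z = t} with hU
  haveI : Finite S := fiber_finite t D
  haveI : Finite U := fiber_finite t (D + c')
  set F : S → U := fun y => ⟨h (shift A (h.symm y.1)), by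
    rw [hboost (h.symm y.1), h.apply_symm_apply]
    exact y.2⟩ with hF
  have hFsurj : Function.Surjective F := by
    rintro ⟨z, hz⟩
    obtain ⟨x₃, hx₃⟩ := shift_surj hA (h.symm z)
    have hyS : (shift B)^[D] (h x₃) = t := by
      rw [← hboost x₃, hx₃, h.apply_symm_apply]
      exact hz
    refine ⟨⟨h x₃, hyS⟩, ?_⟩
    apply Subtype.ext
    show h (shift A (h.symm (h x₃))) = z
    rw [h.symm_apply_apply, hx₃, h.apply_symm_apply]
  set G : S → U := fun y => ⟨backExt hB c' y.1, by
    rw [Function.iterate_add_apply, iter_backExt]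
    exact y.2⟩ with hG
  have hGinj : Function.Injective G := by
    intro y y' hyy
    have := congrArg (fun u => (shift B)^[c'] u.1) hyy
    simp only [hG, iter_backExt] at this
    exact Subtype.ext this
  letI := Fintype.ofFinite S
  letI := Fintype.ofFinite U
  have hc1 : Fintype.card S ≤ Fintype.card U := Fintype.card_le_of_injective G hGinj
  have hc2 : Fintype.card U ≤ Fintype.card S := Fintype.card_le_of_surjective F hFsurj
  have hbij : Function.Bijective F :=
    (Fintype.bijective_iff_surjective_and_card F).mpr ⟨hFsurj, by omega⟩
  have ha : (shift B)^[D] (h x₁) = t := ht.symm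
  have hab : F ⟨h x₁, ha⟩ = F ⟨h x₂, ht2⟩ := by
    apply Subtype.ext
    show h (shift A (h.symm (h x₁))) = h (shift A (h.symm (h x₂)))
    rw [h.symm_apply_apply, h.symm_apply_apply, hxe]
  have := hbij.injective hab
  have : h x₁ = h x₂ := congrArg Subtype.val this
  exact hxne (h.injective this)

end COEaux


namespace COEaux

private lemma iter_swap' {α : Type*} (f : α → α) (a b : ℕ) (x : α) :
    f^[a] (f^[b] x) = f^[b] (f^[a] x) := by
  rw [← Function.iterate_add_apply, ← Function.iterate_add_apply, add_comm]

variable {N M : ℕ} {A : Matrix (Fin N) (Fin N) ℕ} {B : Matrix (Fin M) (Fin M) ℕ}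

lemma iterR1 (h : ↥(MarkovShift A) ≃ₜ ↥(MarkovShift B)) (k₁ l₁ : ↥(MarkovShift A) → ℕ)
    (hrel : ∀ x, (shift B)^[k₁ x] (h (shift A x)) = (shift B)^[l₁ x] (h x))
    (e : ℕ) (hcc : ∀ x, l₁ x = k₁ x + e) :
    ∀ m (x : ↥(MarkovShift A)), ∃ K,
      (shift B)^[K] (h ((shift A)^[m] x)) = (shift B)^[K + m * e] (h x) := by
  intro m
  induction m with
  | zero => exact fun x => ⟨0, by simp⟩
  | succ m ih =>
      intro x
      obtain ⟨K, hK⟩ := ih x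
      set z := (shift A)^[m] x with hzdef
      have hz := hrel z
      rw [hcc z] at hz
      refine ⟨K + k₁ z, ?_⟩
      have step : (shift B)^[K + k₁ z] (h ((shift A)^[m+1] x)) =
          (shift B)^[k₁ z + e + (K + m * e)] (h x) := by
        rw [Function.iterate_add_apply, Function.iterate_succ_apply' (shift A) m x, ← hzdef, hz,
          iter_swap', hK, ← Function.iterate_add_apply]
      rw [step]
      congr 1
      ring
lemma key_identity (h : ↥(MarkovShift A) ≃ₜ ↥(MarkovShift B))
    (k₁ l₁ : ↥(MarkovShift A) → ℕ) (k₂ l₂ : ↥(MarkovShift B) → ℕ)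
    (hrel1 : ∀ x, (shift B)^[k₁ x] (h (shift A x)) = (shift B)^[l₁ x] (h x))
    (hrel2 : ∀ y, (shift A)^[k₂ y] (h.symm (shift B y)) = (shift A)^[l₂ y] (h.symm y))
    (e : ℕ) (hcc : ∀ x, l₁ x = k₁ x + e)
    (y : ↥(MarkovShift B)) (hy : ¬ EventuallyPeriodicPt B y) :
    e = 1 ∧ l₂ y = k₂ y + 1 := by
  obtain ⟨Ka, hKa⟩ := iterR1 h k₁ l₁ hrel1 e hcc (k₂ y) (h.symm (shift B y))
  obtain ⟨Kb, hKb⟩ := iterR1 h k₁ l₁ hrel1 e hcc (l₂ y) (h.symm y)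
  rw [hrel2 y, h.apply_symm_apply] at hKa
  rw [h.apply_symm_apply] at hKb
  -- hKa : σ^[Ka] (h u) = σ^[Ka + k₂ y * e] (σ_B y), with u = σ_A^[l₂ y] (h.symm y)
  have hKa' : (shift B)^[Ka] (h ((shift A)^[l₂ y] (h.symm y))) =
      (shift B)^[Ka + k₂ y * e + 1] y := by
    rw [hKa, ← Function.iterate_succ_apply]
  have h1 := congrArg ((shift B)^[Kb]) hKa'
  have h2 := congrArg ((shift B)^[Ka]) hKb
  rw [← Function.iterate_add_apply, ← Function.iterate_add_apply] at h1
  rw [← Function.iterate_add_apply, ← Function.iterate_add_apply] at h2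
  rw [show Ka + Kb = Kb + Ka by ring] at h2
  have h3 : (shift B)^[Kb + (Ka + k₂ y * e + 1)] y = (shift B)^[Ka + (Kb + l₂ y * e)] y := by
    rw [← h1, ← h2]
  have h4 := iter_eq_of_not_ep hy h3
  have he0 : e ≠ 0 := by
    intro h0
    rw [h0] at h4
    omega
  have hlk : k₂ y * e < l₂ y * e := by omega
  have hkl : k₂ y < l₂ y := Nat.lt_of_mul_lt_mul_right hlk
  have hsub : (l₂ y - k₂ y) * e = 1 := by
    rw [Nat.sub_mul]
    omega
  have he1 : e = 1 := Nat.dvd_one.mp ⟨l₂ y - k₂ y, by rw [mul_comm] at hsub; exact hsub.symm⟩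
  refine ⟨he1, ?_⟩
  rw [he1, mul_one] at hsub
  omega

end COEaux


namespace COEaux

variable {N M : ℕ} {A : Matrix (Fin N) (Fin N) ℕ} {B : Matrix (Fin M) (Fin M) ℕ}

lemma mainlemma (hA : IsIrredNonPerm A) (hB : IsIrredNonPerm B)
    (h : ↥(MarkovShift A) ≃ₜ ↥(MarkovShift B))
    (k₁ l₁ : ↥(MarkovShift A) → ℕ) (k₂ l₂ : ↥(MarkovShift B) → ℕ)
    (hw : COEWitness A B h k₁ l₁ k₂ l₂)
    (C : ℤ) (hC : ∀ x, (l₁ x : ℤ) - (k₁ x : ℤ) = C) :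
    (∀ x, (l₁ x : ℤ) - (k₁ x : ℤ) = 1) ∧ (∀ y, (l₂ y : ℤ) - (k₂ y : ℤ) = 1) := by
  obtain ⟨hk₁, hl₁, hk₂, hl₂, hrel1, hrel2⟩ := hw
  rcases le_or_gt C 0 with hC0 | hC0
  · exfalso
    refine nonpos_impossible hA hB h k₁ l₁ hl₁ hrel1 (-C).toNat (fun x => ?_)
    have := hC x
    omega
  · set e := C.toNat with he
    have hcc : ∀ x, l₁ x = k₁ x + e := by
      intro x
      have := hC x
      omega
    obtain ⟨y₀, hy₀⟩ := exists_nonep hB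
    obtain ⟨he1, -⟩ := key_identity h k₁ l₁ k₂ l₂ hrel1 hrel2 e hcc y₀ hy₀
    constructor
    · intro x
      have := hcc x
      omega
    · intro y
      have hU : IsOpen (k₂ ⁻¹' {k₂ y} ∩ l₂ ⁻¹' {l₂ y}) :=
        (IsOpen.preimage hk₂ (isOpen_discrete _)).inter (IsOpen.preimage hl₂ (isOpen_discrete _))
      obtain ⟨n, hn⟩ := cyl_subset_open hU ⟨rfl, rfl⟩
      obtain ⟨z, hzcyl, hznep⟩ := exists_nonep_cyl hB y n
      obtain ⟨-, hz2⟩ := key_identity h k₁ l₁ k₂ l₂ hrel1 hrel2 e hcc z hznep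
      obtain ⟨hzk, hzl⟩ := hn z hzcyl
      simp only [Set.mem_preimage, Set.mem_singleton_iff] at hzk hzl
      rw [← hzk, ← hzl]
      omega

end COEaux



/-- if either cocycle function of a continuous orbit equivalence is
constant, then both are identically `1`. -/
theorem cocycle_const_implies_both_one {N M : ℕ}
    (A : Matrix (Fin N) (Fin N) ℕ) (B : Matrix (Fin M) (Fin M) ℕ)
    (hA : IsIrredNonPerm A) (hB : IsIrredNonPerm B)
    (h : ↥(MarkovShift A) ≃ₜ ↥(MarkovShift B))
    (k₁ l₁ : ↥(MarkovShift A) → ℕ) (k₂ l₂ : ↥(MarkovShift B) → ℕ)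
    (hw : COEWitness A B h k₁ l₁ k₂ l₂)
    (hconst : (∃ C₁ : ℤ, ∀ x, (l₁ x : ℤ) - (k₁ x : ℤ) = C₁) ∨
              (∃ C₂ : ℤ, ∀ y, (l₂ y : ℤ) - (k₂ y : ℤ) = C₂)) :
    (∀ x, (l₁ x : ℤ) - (k₁ x : ℤ) = 1) ∧ (∀ y, (l₂ y : ℤ) - (k₂ y : ℤ) = 1) := by
  
  rcases hconst with ⟨C, hC⟩ | ⟨C, hC⟩
  · exact COEaux.mainlemma hA hB h k₁ l₁ k₂ l₂ hw C hC
  · have hw' : COEWitness B A h.symm k₂ l₂ k₁ l₁ := by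
      obtain ⟨hk₁, hl₁, hk₂, hl₂, hrel1, hrel2⟩ := hw
      refine ⟨hk₂, hl₂, hk₁, hl₁, hrel2, fun x => ?_⟩
      rw [Homeomorph.symm_symm]
      exact hrel1 x
    obtain ⟨h2, h1⟩ := COEaux.mainlemma hB hA h.symm k₂ l₂ k₁ l₁ hw' C hC
    exact ⟨h1, h2⟩
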